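/- Let N be the set of coset leaders chosen via a degree-compatible term ordering (so each n ∈ N has minimal weight in its coset). Then for all n ∈ N and all i, the weights satisfy |wt(φ(n, e_i)) − wt(n)| ≤ 1. -/

import Mathlib

lemma norm_add_single_le {n : ℕ} (x : Fin n → ZMod 2) (i : Fin n) :
    hammingNorm (x + Pi.single i 1) ≤ hammingNorm x + 1 := by
  calc hammingNorm (x + Pi.single i 1) = hammingDist (x + Pi.single i 1) 0 :=
        (hammingDist_zero_right _).symm
    _ ≤ hammingDist (x + Pi.single i 1) (Pi.single i 1) + hammingDist (Pi.single i 1) 0 :=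
        hammingDist_triangle _ _ _
    _ ≤ hammingNorm x + 1 := by
        rw [hammingDist_eq_hammingNorm, neg_add, neg_add_cancel_right, hammingDist_zero_right,
          show -x = x from funext fun j => ZMod.neg_eq_self_mod_two (x j)]
        gcongr
        have : ({j | Pi.single (M := fun _ : Fin n => ZMod 2) i 1 j ≠ 0} : Finset (Fin n)) ⊆ {i} := by
          intro j hj
          simp only [Finset.mem_filter, Finset.mem_univ, true_and, ne_eq] at hj
          simp only [Finset.mem_singleton]
          by_contra h
          exact hj (Pi.single_eq_of_ne h 1)
        simpa [hammingNorm] using (Finset.card_le_card this).trans (by simp)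

/-- If the transversal `N` of a Gröbner representation consists of coset leaders,
then applying `φ` with a standard basis vector changes the weight by at most 1. -/
theorem phi_weight_diff_le_one (n : ℕ) (C : Submodule (ZMod 2) (Fin n → ZMod 2))
    (N : Set (Fin n → ZMod 2)) (φ : (Fin n → ZMod 2) → Fin n → (Fin n → ZMod 2))
    (h0 : (0 : Fin n → ZMod 2) ∈ N)
    (htrans : ∀ y : Fin n → ZMod 2, ∃! m, m ∈ N ∧ y - m ∈ C)
    (hlead : ∀ m ∈ N, ∀ v : Fin n → ZMod 2, v - m ∈ C → hammingNorm m ≤ hammingNorm v)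
    (hφ : ∀ m ∈ N, ∀ i : Fin n, φ m i ∈ N ∧ (m + Pi.single i 1) - φ m i ∈ C) :
    ∀ m ∈ N, ∀ i : Fin n,
      |(hammingNorm (φ m i) : ℤ) - (hammingNorm m : ℤ)| ≤ 1 := by
  intro m hm i
  obtain ⟨hφN, hφC⟩ := hφ m hm i
  -- upper bound: wt(φ m i) ≤ wt(m + e_i) ≤ wt(m) + 1
  have h1 : hammingNorm (φ m i) ≤ hammingNorm m + 1 := by
    have := hlead (φ m i) hφN (m + Pi.single i 1) hφC
    exact this.trans (norm_add_single_le m i)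
  -- lower bound: wt(m) ≤ wt(φ m i + e_i) ≤ wt(φ m i) + 1
  have hC2 : (φ m i + Pi.single i 1) - m ∈ C := by
    have : (φ m i + Pi.single i 1) - m = -((m + Pi.single i 1) - φ m i) := by
      ext j
      simp only [Pi.sub_apply, Pi.add_apply, Pi.neg_apply, CharTwo.neg_eq, sub_eq_add_neg]
      ring
    rw [this]
    exact C.neg_mem hφC
  have h2 : hammingNorm m ≤ hammingNorm (φ m i) + 1 :=
    (hlead m hm (φ m i + Pi.single i 1) hC2).trans (norm_add_single_le (φ m i) i)
  rw [abs_le]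
  omega
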